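/- For all polynomials p, q in ℂ[z_0,…,z_{m−1}], the Bessel–Fischer product satisfies ⟨R² p, q⟩_B = 0 = ⟨p, R² q⟩_B, where R² = ∑_{i,j} β^{ij} z_i z_j; hence the Bessel–Fischer product descends to a well-defined pairing on the quotient ℂ[z]/⟨R²⟩. -/

import Mathlib

open MvPolynomial

noncomputable section

/-- Complex polynomials in the variables `z_0, …, z_{m−1}`. -/
abbrev Pm (m : ℕ) := MvPolynomial (Fin m) ℂ

/-- The diagonal entries of the bilinear form `β`: `β_{00} = −1`, `β_{kk} = 1` for `k ≥ 1`. -/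
def sgn (m : ℕ) (i : Fin m) : ℂ := if (i : ℕ) = 0 then -1 else 1

/-- The plain partial derivative `∂^i` as a linear operator. -/
def DOp (m : ℕ) (i : Fin m) : Module.End ℂ (Pm m) := (pderiv i).toLinearMap

/-- The lowered partial derivative `∂_i = ∑_k β_{ik} ∂^k`. -/
def dlow (m : ℕ) (i : Fin m) : Module.End ℂ (Pm m) := sgn m i • DOp m i

/-- Multiplication by the variable `z_i`. -/
def mulX (m : ℕ) (i : Fin m) : Module.End ℂ (Pm m) := LinearMap.mulLeft ℂ (X i)

/-- The Euler operator `E = ∑_{i,j} β^{ij} z_i ∂_j`. -/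
def EOp (m : ℕ) : Module.End ℂ (Pm m) := ∑ i, sgn m i • (mulX m i * dlow m i)

/-- The Laplacian `Δ = ∑_{i,j} β^{ij} ∂_i ∂_j`. -/
def LapOp (m : ℕ) : Module.End ℂ (Pm m) := ∑ i, sgn m i • (dlow m i * dlow m i)

/-- The Bessel operator `B(z_i) = (m − 2 + 2E)∂_i − z_i Δ` (parameter `λ = 2 − m`). -/
def BOp (m : ℕ) (i : Fin m) : Module.End ℂ (Pm m) :=
  (((m : ℂ) - 2) • (1 : Module.End ℂ (Pm m)) + (2 : ℂ) • EOp m) * dlow m i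
    - mulX m i * LapOp m

/-- The modified Bessel operator: `B̃(z_0) = −B(z_0)`, `B̃(z_k) = B(z_k)` for `k ≥ 1`. -/
def BtOp (m : ℕ) (i : Fin m) : Module.End ℂ (Pm m) := sgn m i • BOp m i

/-- The Bessel–Fischer product `⟨p,q⟩_B := (p(B̃) q̄)(0)`: substitute the modified
Bessel operators for the variables of `p`, apply to the coefficient-conjugate of `q`,
and evaluate at `0`. -/
def BF (m : ℕ) (p q : Pm m) : ℂ :=
  eval (0 : Fin m → ℂ)
    (((∑ α ∈ p.support, p.coeff α • (List.ofFn fun i : Fin m => (BtOp m i) ^ (α i)).prod) :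
        Module.End ℂ (Pm m)) (map (starRingEnd ℂ) q))

/-- The angular momentum operator `L_{ij} = z_i ∂_j − z_j ∂_i`. -/
def LOp (m : ℕ) (i j : Fin m) : Module.End ℂ (Pm m) :=
  mulX m i * dlow m j - mulX m j * dlow m i

/-- The squared radial coordinate `R² = ∑_{i,j} β^{ij} z_i z_j`. -/
def R2 (m : ℕ) : Pm m := ∑ i, sgn m i • (X i * X i)
namespace Stmt11Aux

set_option maxHeartbeats 1000000
set_option synthInstance.maxHeartbeats 1000000
open Finset

variable {m : ℕ}

lemma sgn_sq (i : Fin m) : sgn m i * sgn m i = 1 := by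
  unfold sgn; split_ifs <;> norm_num

lemma pderiv_pderiv_comm (i j : Fin m) (p : Pm m) :
    pderiv i (pderiv j p) = pderiv j (pderiv i p) := by
  have h2 : ∀ (a b k : Fin m), pderiv a (pderiv b (X k : Pm m)) = 0 := by
    intro a b k
    rcases eq_or_ne k b with rfl | h
    · simp
    · simp [pderiv_X_of_ne h]
  induction p using MvPolynomial.induction_on with
  | C a => simp
  | add p q hp hq => simp [hp, hq]
  | mul_X p k hp =>
    simp only [pderiv_mul, map_add, hp, h2]
    ring

lemma DZ (i j : Fin m) :
    DOp m i * mulX m j = mulX m j * DOp m i + if i = j then 1 else 0 := by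
  rcases eq_or_ne i j with rfl | h
  · refine LinearMap.ext fun f => ?_
    simp [DOp, mulX, Module.End.mul_apply, pderiv_mul]
  · refine LinearMap.ext fun f => ?_
    simp [DOp, mulX, Module.End.mul_apply, pderiv_mul, h, pderiv_X_of_ne (Ne.symm h)]

lemma DD (i j : Fin m) : DOp m i * DOp m j = DOp m j * DOp m i := by
  exact LinearMap.ext fun f => pderiv_pderiv_comm i j f

lemma ZZ (i j : Fin m) : mulX m i * mulX m j = mulX m j * mulX m i := by
  refine LinearMap.ext fun f => ?_
  simp [mulX, Module.End.mul_apply]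
  ring

lemma dZ (i j : Fin m) :
    dlow m i * mulX m j = mulX m j * dlow m i + (if i = j then sgn m i else 0) • 1 := by
  unfold dlow
  rw [smul_mul_assoc, DZ, smul_add, mul_smul_comm]
  congr 1
  split_ifs <;> simp

lemma dd (i j : Fin m) : dlow m i * dlow m j = dlow m j * dlow m i := by
  simp only [dlow, smul_mul_assoc, mul_smul_comm, smul_smul]
  rw [DD, mul_comm]

lemma EOp_eq : EOp m = ∑ i, mulX m i * DOp m i := by
  unfold EOp dlow
  refine Finset.sum_congr rfl fun i _ => ?_
  rw [mul_smul_comm, smul_smul, sgn_sq, one_smul]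

lemma dsq (i : Fin m) : dlow m i * dlow m i = DOp m i * DOp m i := by
  rw [dlow, smul_mul_assoc, mul_smul_comm, smul_smul, sgn_sq, one_smul]

lemma Lap_eq : LapOp m = ∑ i, sgn m i • (DOp m i * DOp m i) := by
  unfold LapOp
  exact Finset.sum_congr rfl fun i _ => by rw [dsq]

end Stmt11Aux
namespace Stmt11Aux

set_option maxHeartbeats 1000000
set_option synthInstance.maxHeartbeats 1000000

variable {m : ℕ}

lemma EZ (j : Fin m) : EOp m * mulX m j = mulX m j * EOp m + mulX m j := by
  rw [EOp_eq, Finset.sum_mul]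
  have h : ∀ i ∈ Finset.univ, (mulX m i * DOp m i) * mulX m j
      = mulX m j * (mulX m i * DOp m i) + if i = j then mulX m i else 0 := by
    intro i _
    rw [mul_assoc, DZ, mul_add, ← mul_assoc, ZZ, mul_assoc]
    congr 1
    split_ifs <;> simp
  rw [Finset.sum_congr rfl h, Finset.sum_add_distrib, ← Finset.mul_sum, ← EOp_eq,
    Finset.sum_ite_eq' Finset.univ j (fun i => mulX m i)]
  simp

lemma DE (i : Fin m) : DOp m i * EOp m = EOp m * DOp m i + DOp m i := by
  rw [EOp_eq, Finset.mul_sum, Finset.sum_mul]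
  have h : ∀ j ∈ Finset.univ, DOp m i * (mulX m j * DOp m j)
      = (mulX m j * DOp m j) * DOp m i + if i = j then DOp m i else 0 := by
    intro j _
    rcases eq_or_ne i j with rfl | hne
    · rw [if_pos rfl, ← mul_assoc, DZ, if_pos rfl, add_mul, one_mul, mul_assoc]
    · rw [if_neg hne, add_zero, ← mul_assoc, DZ, if_neg hne, add_zero, mul_assoc,
        DD i j, ← mul_assoc]
  rw [Finset.sum_congr rfl h, Finset.sum_add_distrib,
    Finset.sum_ite_eq Finset.univ i (fun _ => DOp m i)]
  simp [← EOp_eq]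

lemma dE (i : Fin m) : dlow m i * EOp m = EOp m * dlow m i + dlow m i := by
  rw [dlow, smul_mul_assoc, DE, smul_add, mul_smul_comm]

lemma LapZ (i : Fin m) : LapOp m * mulX m i = mulX m i * LapOp m + (2:ℂ) • dlow m i := by
  have h : ∀ j, (DOp m j * DOp m j) * mulX m i
      = mulX m i * (DOp m j * DOp m j) + if j = i then DOp m j + DOp m j else 0 := by
    intro j
    rcases eq_or_ne j i with rfl | hne
    · rw [mul_assoc, DZ, if_pos rfl, mul_add, mul_one, ← mul_assoc, DZ, if_pos rfl,
        add_mul, one_mul, mul_assoc, if_pos rfl, add_assoc]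
    · rw [mul_assoc, DZ, if_neg hne, add_zero, ← mul_assoc, DZ, if_neg hne, add_zero,
        mul_assoc, if_neg hne, add_zero]
  have h2 : ∀ j ∈ Finset.univ, (sgn m j • (DOp m j * DOp m j)) * mulX m i
      = mulX m i * (sgn m j • (DOp m j * DOp m j))
        + (if j = i then (2:ℂ) • dlow m i else 0) := by
    intro j _
    rw [smul_mul_assoc, h j, smul_add, mul_smul_comm]
    congr 1
    rcases eq_or_ne j i with rfl | hne
    · rw [if_pos rfl, if_pos rfl, dlow, smul_add]
      module
    · simp [hne]
  rw [Lap_eq, Finset.sum_mul, Finset.sum_congr rfl h2, Finset.sum_add_distrib,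
    ← Finset.mul_sum, ← Lap_eq, Finset.sum_ite_eq' Finset.univ i (fun _ => (2:ℂ) • dlow m i)]
  simp

lemma LapE : LapOp m * EOp m = EOp m * LapOp m + (2:ℂ) • LapOp m := by
  have h : ∀ j, (DOp m j * DOp m j) * EOp m
      = EOp m * (DOp m j * DOp m j) + (DOp m j * DOp m j + DOp m j * DOp m j) := by
    intro j
    rw [mul_assoc, DE, mul_add, ← mul_assoc, DE, add_mul, mul_assoc, add_assoc]
  have h2 : ∀ j ∈ Finset.univ, (sgn m j • (DOp m j * DOp m j)) * EOp m
      = EOp m * (sgn m j • (DOp m j * DOp m j)) + (2:ℂ) • (sgn m j • (DOp m j * DOp m j)) := by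
    intro j _
    rw [smul_mul_assoc, h j]
    simp only [smul_add, mul_smul_comm]
    module
  rw [Lap_eq, Finset.sum_mul, Finset.sum_congr rfl h2, Finset.sum_add_distrib,
    ← Finset.mul_sum, ← Finset.smul_sum, ← Lap_eq]

end Stmt11Aux
namespace Stmt11Aux

set_option maxHeartbeats 1000000
set_option synthInstance.maxHeartbeats 1000000

variable {m : ℕ}

/-- Multiplication by `R²`. -/
def MOp (m : ℕ) : Module.End ℂ (Pm m) := LinearMap.mulLeft ℂ (R2 m)

lemma M_eq : MOp m = ∑ i, sgn m i • (mulX m i * mulX m i) := by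
  refine LinearMap.ext fun f => ?_
  simp only [MOp, LinearMap.mulLeft_apply, R2, LinearMap.sum_apply, LinearMap.smul_apply,
    Module.End.mul_apply, mulX, Finset.sum_mul, smul_mul_assoc, mul_assoc]

lemma ZM (i : Fin m) : mulX m i * MOp m = MOp m * mulX m i := by
  refine LinearMap.ext fun f => ?_
  simp only [Module.End.mul_apply, MOp, mulX, LinearMap.mulLeft_apply]
  ring

lemma DM (i : Fin m) : DOp m i * MOp m
    = MOp m * DOp m i + ((2:ℂ) * sgn m i) • mulX m i := by
  have h : ∀ j, DOp m i * (mulX m j * mulX m j)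
      = (mulX m j * mulX m j) * DOp m i + if i = j then mulX m j + mulX m j else 0 := by
    intro j
    rcases eq_or_ne i j with rfl | hne
    · rw [if_pos rfl, ← mul_assoc, DZ, if_pos rfl, add_mul, one_mul, mul_assoc, DZ,
        if_pos rfl, mul_add, mul_one, ← mul_assoc, ← add_assoc]
    · rw [if_neg hne, add_zero, ← mul_assoc, DZ, if_neg hne, add_zero, mul_assoc, DZ,
        if_neg hne, add_zero, ← mul_assoc]
  have h2 : ∀ j ∈ Finset.univ, DOp m i * (sgn m j • (mulX m j * mulX m j))
      = (sgn m j • (mulX m j * mulX m j)) * DOp m i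
        + (if i = j then ((2:ℂ) * sgn m i) • mulX m i else 0) := by
    intro j _
    rw [mul_smul_comm, h j, smul_add, smul_mul_assoc]
    congr 1
    rcases eq_or_ne i j with rfl | hne
    · rw [if_pos rfl, if_pos rfl, smul_add]
      module
    · simp [hne]
  rw [M_eq, Finset.mul_sum, Finset.sum_congr rfl h2, Finset.sum_add_distrib,
    ← Finset.sum_mul, ← M_eq, Finset.sum_ite_eq Finset.univ i
      (fun _ => ((2:ℂ) * sgn m i) • mulX m i)]
  simp [← M_eq]

lemma dM (i : Fin m) : dlow m i * MOp m = MOp m * dlow m i + (2:ℂ) • mulX m i := by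
  rw [dlow, smul_mul_assoc, DM, smul_add, mul_smul_comm, smul_smul]
  congr 1
  rw [show sgn m i * ((2:ℂ) * sgn m i) = 2 * (sgn m i * sgn m i) by ring, sgn_sq, mul_one]

lemma EM : EOp m * MOp m = MOp m * EOp m + (2:ℂ) • MOp m := by
  have h2 : ∀ i ∈ Finset.univ, (mulX m i * DOp m i) * MOp m
      = MOp m * (mulX m i * DOp m i) + (2:ℂ) • (sgn m i • (mulX m i * mulX m i)) := by
    intro i _
    rw [mul_assoc, DM, mul_add, ← mul_assoc, ZM, mul_assoc]
    congr 1
    rw [mul_smul_comm, smul_smul]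
  rw [EOp_eq, Finset.sum_mul, Finset.sum_congr rfl h2, Finset.sum_add_distrib,
    ← Finset.mul_sum, ← EOp_eq, ← Finset.smul_sum, ← M_eq]

lemma LapM : LapOp m * MOp m
    = MOp m * LapOp m + (4:ℂ) • EOp m + ((2:ℂ) * (m:ℂ)) • (1 : Module.End ℂ (Pm m)) := by
  have h2 : ∀ j ∈ Finset.univ, (sgn m j • (DOp m j * DOp m j)) * MOp m
      = MOp m * (sgn m j • (DOp m j * DOp m j)) + (4:ℂ) • (mulX m j * DOp m j)
        + (2:ℂ) • (1 : Module.End ℂ (Pm m)) := by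
    intro j _
    have : (DOp m j * DOp m j) * MOp m
        = MOp m * (DOp m j * DOp m j) + ((2:ℂ) * sgn m j) • (mulX m j * DOp m j)
          + ((2:ℂ) * sgn m j) • (DOp m j * mulX m j) := by
      rw [mul_assoc, DM, mul_add, ← mul_assoc, DM, add_mul, mul_assoc, smul_mul_assoc,
        mul_smul_comm]
    rw [smul_mul_assoc, this, smul_add, smul_add, smul_smul, smul_smul]
    rw [show sgn m j * ((2:ℂ) * sgn m j) = 2 * (sgn m j * sgn m j) by ring, sgn_sq, mul_one]
    rw [DZ, if_pos rfl, mul_smul_comm, smul_add, add_assoc, add_assoc]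
    congr 1
    rw [← add_assoc]
    congr 1
    module
  rw [Lap_eq, Finset.sum_mul, Finset.sum_congr rfl h2]
  rw [Finset.sum_add_distrib, Finset.sum_add_distrib, ← Finset.mul_sum, ← Lap_eq,
    ← Finset.smul_sum, ← EOp_eq, Finset.sum_const, Finset.card_univ, Fintype.card_fin]
  congr 1
  rw [← Nat.cast_smul_eq_nsmul ℂ, smul_smul]
  congr 1
  ring

end Stmt11Aux
namespace Stmt11Aux

set_option maxHeartbeats 1000000
set_option synthInstance.maxHeartbeats 1000000

variable {m : ℕ}

lemma swap2 {A : Type*} [Ring A] {a b e : A} (h : a * b = b * a + e) (x : A) :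
    (x * a) * b = (x * b) * a + x * e := by
  rw [mul_assoc, h, mul_add, ← mul_assoc]

lemma swap3 {A : Type*} [Ring A] {a b e : A} (h : a * b = b * a + e) (x y : A) :
    (x * a) * (b * y) = (x * b) * (a * y) + x * (e * y) := by
  rw [mul_assoc, ← mul_assoc a, h, add_mul, mul_add, mul_assoc b, ← mul_assoc x b]

/-- The operator `(m-2) + 2E`. -/
def AOp (m : ℕ) : Module.End ℂ (Pm m) :=
  ((m : ℂ) - 2) • (1 : Module.End ℂ (Pm m)) + (2 : ℂ) • EOp m

lemma BOp_eq (i : Fin m) : BOp m i = AOp m * dlow m i - mulX m i * LapOp m := rfl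

lemma Amul (T : Module.End ℂ (Pm m)) :
    AOp m * T = ((m : ℂ) - 2) • T + (2:ℂ) • (EOp m * T) := by
  simp [AOp, add_mul, smul_mul_assoc]

lemma ZA (i : Fin m) :
    mulX m i * AOp m = ((m : ℂ) - 2) • mulX m i + (2:ℂ) • (mulX m i * EOp m) := by
  simp [AOp, mul_add, mul_smul_comm]

lemma dA (i : Fin m) : dlow m i * AOp m = AOp m * dlow m i + (2:ℂ) • dlow m i := by
  simp only [AOp, mul_add, add_mul, mul_smul_comm, smul_mul_assoc, mul_one, one_mul, dE]
  module

lemma AZ (i : Fin m) : AOp m * mulX m i = mulX m i * AOp m + (2:ℂ) • mulX m i := by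
  simp only [AOp, mul_add, add_mul, mul_smul_comm, smul_mul_assoc, mul_one, one_mul, EZ]
  module

lemma LapA : LapOp m * AOp m = AOp m * LapOp m + (4:ℂ) • LapOp m := by
  simp only [AOp, mul_add, add_mul, mul_smul_comm, smul_mul_assoc, mul_one, one_mul, LapE]
  module

lemma AM : AOp m * MOp m = MOp m * AOp m + (4:ℂ) • MOp m := by
  simp only [AOp, mul_add, add_mul, mul_smul_comm, smul_mul_assoc, mul_one, one_mul, EM]
  try module

lemma dLap (i : Fin m) : dlow m i * LapOp m = LapOp m * dlow m i := by
  unfold LapOp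
  rw [Finset.mul_sum, Finset.sum_mul]
  refine Finset.sum_congr rfl fun j _ => ?_
  rw [mul_smul_comm, smul_mul_assoc]
  rw [← mul_assoc, dd i j, mul_assoc, dd i j, ← mul_assoc]

lemma T1 (i j : Fin m) : (AOp m * dlow m i) * (AOp m * dlow m j)
    = AOp m * AOp m * (dlow m i * dlow m j)
      + (2:ℂ) • (AOp m * (dlow m i * dlow m j)) := by
  rw [swap3 (dA i) (AOp m) (dlow m j), smul_mul_assoc, mul_smul_comm]

lemma T2 (i j : Fin m) : (AOp m * dlow m i) * (mulX m j * LapOp m)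
    = mulX m j * AOp m * (dlow m i * LapOp m)
      + (2:ℂ) • (mulX m j * (dlow m i * LapOp m))
      + (if i = j then sgn m i else 0) • (AOp m * LapOp m) := by
  rw [swap3 (dZ i j) (AOp m) (LapOp m), smul_mul_assoc, one_mul, mul_smul_comm, AZ,
    add_mul, smul_mul_assoc, mul_assoc (mulX m j) (AOp m)]

lemma T3 (i j : Fin m) : (mulX m i * LapOp m) * (AOp m * dlow m j)
    = mulX m i * AOp m * (dlow m j * LapOp m)
      + (4:ℂ) • (mulX m i * (dlow m j * LapOp m)) := by
  rw [swap3 LapA (mulX m i) (dlow m j), smul_mul_assoc, mul_smul_comm, ← dLap j]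

lemma T4 (i j : Fin m) : (mulX m i * LapOp m) * (mulX m j * LapOp m)
    = mulX m i * mulX m j * (LapOp m * LapOp m)
      + (2:ℂ) • (mulX m i * (dlow m j * LapOp m)) := by
  rw [swap3 (LapZ j) (mulX m i) (LapOp m), smul_mul_assoc, mul_smul_comm]

lemma eps_symm (i j : Fin m) :
    (if j = i then sgn m j else 0) = (if i = j then sgn m i else 0) := by
  rcases eq_or_ne i j with rfl | hne
  · simp
  · simp [hne, hne.symm]

lemma BB_comm (i j : Fin m) : BOp m i * BOp m j = BOp m j * BOp m i := by
  rw [BOp_eq i, BOp_eq j, sub_mul, mul_sub, mul_sub, sub_mul, mul_sub, mul_sub,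
    T1 i j, T2 i j, T3 i j, T4 i j, T1 j i, T2 j i, T3 j i, T4 j i,
    dd j i, ZZ j i, eps_symm i j]
  module

end Stmt11Aux
namespace Stmt11Aux

set_option maxHeartbeats 1000000
set_option synthInstance.maxHeartbeats 1000000

variable {m : ℕ}

/-- The shifted Bessel operator appearing in `B_i ∘ R² = R² ∘ B'_i`. -/
def BOp' (m : ℕ) (i : Fin m) : Module.End ℂ (Pm m) :=
  (AOp m + (4:ℂ) • 1) * dlow m i - mulX m i * LapOp m

lemma LapM' : LapOp m * MOp m = MOp m * LapOp m
    + ((4:ℂ) • EOp m + ((2:ℂ) * (m:ℂ)) • (1 : Module.End ℂ (Pm m))) := by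
  rw [LapM, add_assoc]

lemma BM (i : Fin m) : BOp m i * MOp m = MOp m * BOp' m i := by
  have h1 : (AOp m * dlow m i) * MOp m
      = (AOp m * MOp m) * dlow m i + AOp m * ((2:ℂ) • mulX m i) := swap2 (dM i) (AOp m)
  have h2 : (mulX m i * LapOp m) * MOp m
      = (mulX m i * MOp m) * LapOp m
        + mulX m i * ((4:ℂ) • EOp m + ((2:ℂ) * (m:ℂ)) • (1 : Module.End ℂ (Pm m))) :=
    swap2 LapM' (mulX m i)
  rw [BOp_eq, sub_mul, h1, h2, AM, ZM, BOp']
  simp only [add_mul, mul_add, mul_sub, sub_mul, smul_mul_assoc, mul_smul_comm, one_mul,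
    mul_one, mul_assoc, AZ, ZA, smul_add, smul_smul]
  module

lemma hBB (i : Fin m) : BOp m i * BOp m i
    = AOp m * AOp m * (dlow m i * dlow m i)
      + (2:ℂ) • (AOp m * (dlow m i * dlow m i))
      - (2:ℂ) • (AOp m * ((mulX m i * dlow m i) * LapOp m))
      + mulX m i * mulX m i * (LapOp m * LapOp m)
      - sgn m i • (AOp m * LapOp m) := by
  have hza : mulX m i * AOp m * (dlow m i * LapOp m)
      = AOp m * ((mulX m i * dlow m i) * LapOp m)
        - (2:ℂ) • (mulX m i * (dlow m i * LapOp m)) := by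
    have : mulX m i * AOp m = AOp m * mulX m i - (2:ℂ) • mulX m i := by
      rw [AZ]; abel
    rw [this, sub_mul, smul_mul_assoc, mul_assoc, ← mul_assoc (mulX m i) (dlow m i)]
  rw [BOp_eq, mul_sub, sub_mul, sub_mul, T1 i i, T2 i i, T3 i i, T4 i i, if_pos rfl, hza]
  module

lemma key0 : AOp m * (AOp m * LapOp m) + (2:ℂ) • (AOp m * LapOp m)
      - (2:ℂ) • (AOp m * (EOp m * LapOp m)) - (m:ℂ) • (AOp m * LapOp m) = 0 := by
  simp only [AOp, add_mul, smul_mul_assoc, one_mul, mul_add, mul_smul_comm, smul_add,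
    smul_smul]
  module

lemma sumBB : ∑ i, sgn m i • (BOp m i * BOp m i) = MOp m * (LapOp m * LapOp m) := by
  have hBB2 : ∀ i ∈ Finset.univ, sgn m i • (BOp m i * BOp m i)
      = AOp m * (AOp m * (sgn m i • (dlow m i * dlow m i)))
        + (2:ℂ) • (AOp m * (sgn m i • (dlow m i * dlow m i)))
        - (2:ℂ) • (AOp m * ((sgn m i • (mulX m i * dlow m i)) * LapOp m))
        + (sgn m i • (mulX m i * mulX m i)) * (LapOp m * LapOp m)
        - (sgn m i * sgn m i) • (AOp m * LapOp m) := by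
    intro i _
    rw [hBB i]
    simp only [smul_add, smul_sub, mul_smul_comm, smul_mul_assoc, smul_smul, mul_assoc]
    module
  rw [Finset.sum_congr rfl hBB2]
  have hL : ∑ i, sgn m i • (dlow m i * dlow m i) = LapOp m := rfl
  have hE : ∑ i, sgn m i • (mulX m i * dlow m i) = EOp m := rfl
  have hsgn : ∀ i ∈ Finset.univ, (sgn m i * sgn m i) • (AOp m * LapOp m)
      = AOp m * LapOp m := fun i _ => by rw [sgn_sq, one_smul]
  have h1 : ∑ i, AOp m * (AOp m * (sgn m i • (dlow m i * dlow m i)))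
      = AOp m * (AOp m * LapOp m) := by
    rw [← Finset.mul_sum, ← Finset.mul_sum, hL]
  have h2 : ∑ i, (2:ℂ) • (AOp m * (sgn m i • (dlow m i * dlow m i)))
      = (2:ℂ) • (AOp m * LapOp m) := by
    rw [← Finset.smul_sum, ← Finset.mul_sum, hL]
  have h3 : ∑ i, (2:ℂ) • (AOp m * ((sgn m i • (mulX m i * dlow m i)) * LapOp m))
      = (2:ℂ) • (AOp m * (EOp m * LapOp m)) := by
    rw [← Finset.smul_sum, ← Finset.mul_sum, ← Finset.sum_mul, hE]
  have h4 : ∑ i, (sgn m i • (mulX m i * mulX m i)) * (LapOp m * LapOp m)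
      = MOp m * (LapOp m * LapOp m) := by
    rw [← Finset.sum_mul, ← M_eq]
  have h5 : ∑ i, (sgn m i * sgn m i) • (AOp m * LapOp m)
      = (m:ℂ) • (AOp m * LapOp m) := by
    rw [Finset.sum_congr rfl hsgn, Finset.sum_const, Finset.card_univ, Fintype.card_fin,
      ← Nat.cast_smul_eq_nsmul ℂ]
  rw [Finset.sum_sub_distrib, Finset.sum_add_distrib, Finset.sum_sub_distrib,
    Finset.sum_add_distrib, h1, h2, h3, h4, h5]
  rw [← sub_eq_zero]
  have h := key0 (m := m)
  rw [← h]
  module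
end Stmt11Aux
namespace Stmt11Aux

set_option maxHeartbeats 1000000
set_option synthInstance.maxHeartbeats 1000000

variable {m : ℕ}

lemma BtBt (i : Fin m) : BtOp m i * BtOp m i = BOp m i * BOp m i := by
  rw [BtOp, smul_mul_assoc, mul_smul_comm, smul_smul, sgn_sq, one_smul]

lemma Bt_comm (i j : Fin m) : BtOp m i * BtOp m j = BtOp m j * BtOp m i := by
  simp only [BtOp, smul_mul_assoc, mul_smul_comm, smul_smul]
  rw [BB_comm i j, mul_comm (sgn m i)]

/-- The shifted modified Bessel operator. -/
def BtOp2 (m : ℕ) (i : Fin m) : Module.End ℂ (Pm m) := sgn m i • BOp' m i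

lemma BtM (i : Fin m) : BtOp m i * MOp m = MOp m * BtOp2 m i := by
  rw [BtOp, BtOp2, smul_mul_assoc, BM, mul_smul_comm]

lemma powM (k : ℕ) (i : Fin m) :
    BtOp m i ^ k * MOp m = MOp m * BtOp2 m i ^ k := by
  induction k with
  | zero => simp
  | succ k ih =>
    rw [pow_succ, mul_assoc, BtM, ← mul_assoc, ih, mul_assoc, ← pow_succ]

lemma listM : ∀ (n : ℕ) (u v : Fin n → Module.End ℂ (Pm m)),
    (∀ i, u i * MOp m = MOp m * v i) →
    (List.ofFn u).prod * MOp m = MOp m * (List.ofFn v).prod := by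
  intro n
  induction n with
  | zero => intro u v h; simp
  | succ n ih =>
    intro u v h
    rw [List.ofFn_succ, List.ofFn_succ, List.prod_cons, List.prod_cons, mul_assoc,
      ih _ _ (fun i => h i.succ), ← mul_assoc, h 0, mul_assoc]

/-- Substitution of the modified Bessel operators into `p`. -/
def Phi (m : ℕ) (p : Pm m) : Module.End ℂ (Pm m) :=
  ∑ α ∈ p.support, p.coeff α • (List.ofFn fun i : Fin m => (BtOp m i) ^ (α i)).prod

/-- Substitution of the shifted modified Bessel operators into `p`. -/
def Phi2 (m : ℕ) (p : Pm m) : Module.End ℂ (Pm m) :=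
  ∑ α ∈ p.support, p.coeff α • (List.ofFn fun i : Fin m => (BtOp2 m i) ^ (α i)).prod

lemma PhiM (p : Pm m) : Phi m p * MOp m = MOp m * Phi2 m p := by
  rw [Phi, Phi2, Finset.sum_mul, Finset.mul_sum]
  refine Finset.sum_congr rfl fun α _ => ?_
  rw [smul_mul_assoc, listM m _ _ (fun i => powM (α i) i), mul_smul_comm]

end Stmt11Aux
namespace Stmt11Aux

set_option maxHeartbeats 1000000
set_option synthInstance.maxHeartbeats 1000000

variable {m : ℕ}

lemma Phi_R2_mul (p : Pm m) :
    Phi m (R2 m * p) = MOp m * (LapOp m * LapOp m) * Phi m p := by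
  classical
  set S : Set (Module.End ℂ (Pm m)) := Set.range (BtOp m) with hS
  have hcomm : ∀ a ∈ S, ∀ b ∈ S, a * b = b * a := by
    rintro a ⟨i, rfl⟩ c ⟨j, rfl⟩
    exact Bt_comm i j
  letI : CommSemiring (Algebra.adjoin ℂ S) := Algebra.adjoinCommSemiringOfComm ℂ hcomm
  let b : Fin m → Algebra.adjoin ℂ S :=
    fun i => ⟨BtOp m i, Algebra.subset_adjoin ⟨i, rfl⟩⟩
  let V := (Algebra.adjoin ℂ S).val
  have key : ∀ r : Pm m, Phi m r = V (aeval b r) := by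
    intro r
    have h1 : (aeval b) r = ∑ α ∈ r.support, (r.coeff α) • ∏ i, b i ^ α i := by
      conv_lhs => rw [r.as_sum]
      rw [map_sum]
      refine Finset.sum_congr rfl fun α _ => ?_
      rw [aeval_monomial, Finsupp.prod_fintype _ _ (fun i => pow_zero (b i)),
        ← Algebra.smul_def]
    rw [h1, map_sum]
    refine Finset.sum_congr rfl fun α _ => ?_
    rw [map_smul]
    congr 1
    rw [← List.prod_ofFn, map_list_prod, List.map_ofFn]
    congr 1
  rw [key (R2 m * p), map_mul, map_mul, ← key p]
  congr 1
  have h2 : (aeval b) (R2 m) = ∑ i, sgn m i • (b i * b i) := by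
    rw [R2, map_sum]
    refine Finset.sum_congr rfl fun i _ => ?_
    rw [map_smul, map_mul, aeval_X]
  rw [h2, map_sum, ← sumBB]
  refine Finset.sum_congr rfl fun i _ => ?_
  rw [map_smul, map_mul]
  show sgn m i • (BtOp m i * BtOp m i) = _
  rw [BtBt]

lemma eval0_R2_mul (g : Pm m) : eval (0 : Fin m → ℂ) (R2 m * g) = 0 := by
  rw [map_mul]
  convert zero_mul _
  simp [R2]

lemma sgn_conj (i : Fin m) : (starRingEnd ℂ) (sgn m i) = sgn m i := by
  unfold sgn; split_ifs <;> simp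

lemma mapConj_R2 (q : Pm m) :
    map (starRingEnd ℂ) (R2 m * q) = R2 m * map (starRingEnd ℂ) q := by
  rw [map_mul]
  congr 1
  rw [R2, map_sum]
  refine Finset.sum_congr rfl fun i _ => ?_
  simp [smul_eq_C_mul, sgn_conj]

end Stmt11Aux
open Stmt11Aux in
/-- `⟨R² p, q⟩_B = 0 = ⟨p, R² q⟩_B`; hence the Bessel–Fischer product descends to a
well-defined pairing on the quotient `ℂ[z]/⟨R²⟩`. -/
theorem stmt11 (m : ℕ) (p q : Pm m) :
    BF m (R2 m * p) q = 0 ∧ BF m p (R2 m * q) = 0 := by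
  constructor
  · have h : BF m (R2 m * p) q
        = eval (0 : Fin m → ℂ) ((Phi m (R2 m * p)) (map (starRingEnd ℂ) q)) := rfl
    rw [h, Phi_R2_mul, Module.End.mul_apply, Module.End.mul_apply]
    exact eval0_R2_mul _
  · have h : BF m p (R2 m * q)
        = eval (0 : Fin m → ℂ) ((Phi m p) (map (starRingEnd ℂ) (R2 m * q))) := rfl
    have h2 : R2 m * map (starRingEnd ℂ) q = MOp m (map (starRingEnd ℂ) q) := rfl
    rw [h, mapConj_R2, h2, ← Module.End.mul_apply, PhiM, Module.End.mul_apply]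
    exact eval0_R2_mul _
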